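/- Let α₁, α₂ > 0 with α₁ + α₂ < π/2, let u₁, u₂ be unit vectors in ℝ^(d+1), and suppose |sin(α₁)u₁ + sin(α₂)u₂| = sin(α₁ + α₂). Then the cap centered at (sin(α₁)u₁ + sin(α₂)u₂)/|sin(α₁)u₁ + sin(α₂)u₂| of spherical radius α₁ + α₂ covers both the cap of radius α₁ centered at u₁ and the cap of radius α₂ centered at u₂. -/
import Mathlib


open Real RealInnerProductSpace

/-- Angle triangle inequality in inner-product form: if `⟪a,b⟫ ≥ cos α` and
`⟪c,b⟫ = cos β` for unit vectors, with `α, β ≥ 0` and `α + β ≤ π`, then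
`⟪a,c⟫ ≥ cos (α + β)`. -/
theorem aux_angle_triangle {E : Type*} [NormedAddCommGroup E] [InnerProductSpace ℝ E]
    (a b c : E) (ha : ‖a‖ = 1) (hb : ‖b‖ = 1) (hc : ‖c‖ = 1)
    (α β : ℝ) (hα0 : 0 ≤ α) (hαπ : α ≤ π) (hβ0 : 0 ≤ β) (hsum : α + β ≤ π)
    (h1 : Real.cos α ≤ ⟪a, b⟫) (h2 : ⟪c, b⟫ = Real.cos β) :
    Real.cos (α + β) ≤ ⟪a, c⟫ := by
  have hβπ : β ≤ π := by linarith
  have hbb : ⟪b, b⟫ = (1 : ℝ) := by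
    rw [real_inner_self_eq_norm_sq, hb]; norm_num
  have haa : ⟪a, a⟫ = (1 : ℝ) := by
    rw [real_inner_self_eq_norm_sq, ha]; norm_num
  have hcc : ⟪c, c⟫ = (1 : ℝ) := by
    rw [real_inner_self_eq_norm_sq, hc]; norm_num
  obtain ⟨t, ht⟩ : ∃ t : ℝ, ⟪a, b⟫ = t := ⟨_, rfl⟩
  obtain ⟨s, hs⟩ : ∃ s : ℝ, Real.cos β = s := ⟨_, rfl⟩
  rw [ht] at h1
  rw [hs] at h2
  have hba : ⟪b, a⟫ = t := by rw [← ht]; exact (real_inner_comm b a).symm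
  have hbc : ⟪b, c⟫ = s := by rw [← h2]; exact (real_inner_comm b c).symm
  have ht1 : t ≤ 1 := by
    have := real_inner_le_norm a b; rw [ha, hb, ht] at this; simpa using this
  have htm1 : -1 ≤ t := by
    have := abs_real_inner_le_norm a b; rw [ha, hb, ht] at this
    exact (abs_le.mp (by simpa using this)).1
  have hs1 : s ≤ 1 := hs ▸ Real.cos_le_one β
  have hsm1 : -1 ≤ s := hs ▸ Real.neg_one_le_cos β
  have hna : ‖a - t • b‖ ^ 2 = 1 - t ^ 2 := by
    rw [← real_inner_self_eq_norm_sq]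
    simp only [inner_sub_left, inner_sub_right, real_inner_smul_left, real_inner_smul_right,
      haa, hbb, hba, ht]
    ring
  have hnc : ‖c - s • b‖ ^ 2 = 1 - s ^ 2 := by
    rw [← real_inner_self_eq_norm_sq]
    simp only [inner_sub_left, inner_sub_right, real_inner_smul_left, real_inner_smul_right,
      hcc, hbb, hbc, h2]
    ring
  have hCS : -(‖a - t • b‖ * ‖c - s • b‖) ≤ ⟪a - t • b, c - s • b⟫ :=
    (abs_le.mp (abs_real_inner_le_norm _ _)).1
  have hinner : ⟪a - t • b, c - s • b⟫ = ⟪a, c⟫ - t * s := by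
    simp only [inner_sub_left, inner_sub_right, real_inner_smul_left, real_inner_smul_right,
      hbb, hba, hbc, ht, h2]
    ring
  have hnorma : ‖a - t • b‖ = Real.sqrt (1 - t ^ 2) := by
    rw [← hna, Real.sqrt_sq (norm_nonneg _)]
  have hnormc : ‖c - s • b‖ = Real.sqrt (1 - s ^ 2) := by
    rw [← hnc, Real.sqrt_sq (norm_nonneg _)]
  have hkey : t * s - Real.sqrt (1 - t ^ 2) * Real.sqrt (1 - s ^ 2) ≤ ⟪a, c⟫ := by
    have h := hCS
    rw [hnorma, hnormc, hinner] at h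
    linarith
  have hsβ : Real.sqrt (1 - s ^ 2) = Real.sin β := by
    rw [← hs, ← Real.sin_sq β]
    exact Real.sqrt_sq (Real.sin_nonneg_of_nonneg_of_le_pi hβ0 hβπ)
  have hθ0 : 0 ≤ Real.arccos t := Real.arccos_nonneg t
  have hcosθ : Real.cos (Real.arccos t) = t := Real.cos_arccos htm1 ht1
  have hsinθ : Real.sin (Real.arccos t) = Real.sqrt (1 - t ^ 2) := Real.sin_arccos t
  have hθα : Real.arccos t ≤ α := by
    rw [← Real.arccos_cos hα0 hαπ]
    simp only [Real.arccos]
    have := Real.monotone_arcsin h1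
    linarith
  have hmono : Real.cos (α + β) ≤ Real.cos (Real.arccos t + β) :=
    Real.cos_le_cos_of_nonneg_of_le_pi (by linarith) hsum (by linarith)
  calc Real.cos (α + β) ≤ Real.cos (Real.arccos t + β) := hmono
    _ = t * s - Real.sqrt (1 - t ^ 2) * Real.sqrt (1 - s ^ 2) := by
        rw [Real.cos_add, hcosθ, hsinθ, hsβ, hs]
    _ ≤ ⟪a, c⟫ := hkey

/-- If `α₁, α₂ > 0`, `α₁ + α₂ < π/2`, `u₁, u₂` are unit vectors and
`‖sin α₁ • u₁ + sin α₂ • u₂‖ = sin (α₁ + α₂)`, then the cap of spherical radius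
`α₁ + α₂` centered at the normalization of `sin α₁ • u₁ + sin α₂ • u₂` covers both
the cap of radius `α₁` at `u₁` and the cap of radius `α₂` at `u₂`. -/
theorem two_caps_covered_by_one
    (d : ℕ) (α₁ α₂ : ℝ) (hα₁ : 0 < α₁) (hα₂ : 0 < α₂) (hsum : α₁ + α₂ < π / 2)
    (u₁ u₂ : EuclideanSpace ℝ (Fin (d + 1))) (hu₁ : ‖u₁‖ = 1) (hu₂ : ‖u₂‖ = 1)
    (hnorm : ‖Real.sin α₁ • u₁ + Real.sin α₂ • u₂‖ = Real.sin (α₁ + α₂)) :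
    ∀ x : EuclideanSpace ℝ (Fin (d + 1)), ‖x‖ = 1 →
      (Real.cos α₁ ≤ ⟪x, u₁⟫ ∨ Real.cos α₂ ≤ ⟪x, u₂⟫) →
      Real.cos (α₁ + α₂) ≤
        ⟪x, ‖Real.sin α₁ • u₁ + Real.sin α₂ • u₂‖⁻¹ •
          (Real.sin α₁ • u₁ + Real.sin α₂ • u₂)⟫ := by
  have hπ := Real.pi_pos
  have hs₁pos : 0 < Real.sin α₁ := Real.sin_pos_of_pos_of_lt_pi hα₁ (by linarith)
  have hs₂pos : 0 < Real.sin α₂ := Real.sin_pos_of_pos_of_lt_pi hα₂ (by linarith)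
  have hSpos : 0 < Real.sin (α₁ + α₂) :=
    Real.sin_pos_of_pos_of_lt_pi (by linarith) (by linarith)
  have hwne : ‖Real.sin α₁ • u₁ + Real.sin α₂ • u₂‖ ≠ 0 := by
    rw [hnorm]; exact ne_of_gt hSpos
  have hu₁₁ : ⟪u₁, u₁⟫ = (1 : ℝ) := by
    rw [real_inner_self_eq_norm_sq, hu₁]; norm_num
  have hu₂₂ : ⟪u₂, u₂⟫ = (1 : ℝ) := by
    rw [real_inner_self_eq_norm_sq, hu₂]; norm_num
  have hu₂₁ : ⟪u₂, u₁⟫ = ⟪u₁, u₂⟫ := (real_inner_comm u₂ u₁).symm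
  have hc : ⟪u₁, u₂⟫ = Real.cos (α₁ + α₂) := by
    have h1 : Real.sin (α₁ + α₂) ^ 2 =
        Real.sin α₁ ^ 2 + Real.sin α₂ ^ 2 + 2 * Real.sin α₁ * Real.sin α₂ * ⟪u₁, u₂⟫ := by
      rw [← hnorm, ← real_inner_self_eq_norm_sq]
      simp only [inner_add_left, inner_add_right, real_inner_smul_left, real_inner_smul_right,
        hu₁₁, hu₂₂, hu₂₁]
      ring
    rw [Real.sin_add] at h1
    rw [Real.cos_add]
    have p1 : Real.sin α₁ ^ 2 + Real.cos α₁ ^ 2 = 1 := Real.sin_sq_add_cos_sq α₁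
    have p2 : Real.sin α₂ ^ 2 + Real.cos α₂ ^ 2 = 1 := Real.sin_sq_add_cos_sq α₂
    nlinarith [mul_pos hs₁pos hs₂pos, h1, p1, p2]
  have hvnorm : ‖(‖Real.sin α₁ • u₁ + Real.sin α₂ • u₂‖⁻¹ •
      (Real.sin α₁ • u₁ + Real.sin α₂ • u₂) : EuclideanSpace ℝ (Fin (d + 1)))‖ = 1 := by
    rw [norm_smul, norm_inv, norm_norm, inv_mul_cancel₀ hwne]
  have hv1 : ⟪‖Real.sin α₁ • u₁ + Real.sin α₂ • u₂‖⁻¹ •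
      (Real.sin α₁ • u₁ + Real.sin α₂ • u₂), u₁⟫ = Real.cos α₂ := by
    have hid : Real.sin α₁ + Real.sin α₂ * Real.cos (α₁ + α₂) =
        Real.sin (α₁ + α₂) * Real.cos α₂ := by
      have h := Real.sin_sub (α₁ + α₂) α₂
      simp only [add_sub_cancel_right] at h
      rw [h]; ring
    rw [real_inner_smul_left, inner_add_left, real_inner_smul_left, real_inner_smul_left,
      hu₁₁, hu₂₁, hc, hnorm, mul_one, hid]
    field_simp
  have hv2 : ⟪‖Real.sin α₁ • u₁ + Real.sin α₂ • u₂‖⁻¹ •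
      (Real.sin α₁ • u₁ + Real.sin α₂ • u₂), u₂⟫ = Real.cos α₁ := by
    have hid : Real.sin α₂ + Real.sin α₁ * Real.cos (α₁ + α₂) =
        Real.sin (α₁ + α₂) * Real.cos α₁ := by
      have h := Real.sin_sub (α₁ + α₂) α₁
      simp only [add_sub_cancel_left] at h
      rw [h]; ring
    rw [real_inner_smul_left, inner_add_left, real_inner_smul_left, real_inner_smul_left,
      hu₂₂, hc, hnorm, mul_one]
    rw [inv_mul_eq_div, div_eq_iff (ne_of_gt hSpos)]
    linarith [hid]
  intro x hx hcap
  rcases hcap with h | h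
  · exact aux_angle_triangle x u₁ _ hx hu₁ hvnorm α₁ α₂ hα₁.le (by linarith) hα₂.le
      (by linarith) h hv1
  · have := aux_angle_triangle x u₂ _ hx hu₂ hvnorm α₂ α₁ hα₂.le (by linarith) hα₁.le
      (by linarith) h hv2
    rwa [add_comm] at this
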